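/- With G as above and U = rowspace(U_1 | U_2), rk(U_1) = rk(U_2) = k, define U' = rowspace(U_1 | 0) and U'' = rowspace(0 | U_2). Then Orb_G(U) ∪ {U', U''} is a partial spread of dimension k of F_q^{2k+1} of cardinality q^{k+1} + 1, i.e. any two distinct members intersect trivially. -/

import Mathlib

open Module

/-- The companion matrix of a (monic, degree `k+1`) polynomial `p`. -/
def companion {K : Type*} [Field K] {k : ℕ} (p : Polynomial K) :
    Matrix (Fin (k + 1)) (Fin (k + 1)) K :=
  Matrix.of fun i j =>
    if (i : ℕ) = k then -p.coeff (j : ℕ) else if (i : ℕ) + 1 = (j : ℕ) then 1 else 0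

/-- The orbit of `rowspace(U_1 | U_2)` under the group `G = {diag(I_k, M^i)}`. -/
def orbitSet {K : Type*} [Field K] {k : ℕ}
    (U1 : Matrix (Fin k) (Fin k) K) (U2 : Matrix (Fin k) (Fin (k + 1)) K)
    (M : Matrix (Fin (k + 1)) (Fin (k + 1)) K) :
    Set (Submodule K (Fin k ⊕ Fin (k + 1) → K)) :=
  {W | ∃ i : ℕ, W = Submodule.span K
      (Set.range fun r => Sum.elim (U1 r) (Matrix.vecMul (U2 r) (M ^ i)))}

/-- Full row rank implies `vecMul` has trivial kernel. -/
lemma aux_vecMul_ker {K : Type*} [Field K] {m n : Type*} [Fintype m] [Fintype n]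
    (A : Matrix m n K) (h : A.rank = Fintype.card m) :
    ∀ v : m → K, Matrix.vecMul v A = 0 → v = 0 := by
  have h1 : A.vecMulLinear = Matrix.mulVecLin A.transpose := by
    apply LinearMap.ext; intro v
    simp [Matrix.mulVec_transpose]
  have h2 : Module.finrank K (LinearMap.range A.vecMulLinear) = Fintype.card m := by
    rw [h1]
    show A.transpose.rank = _
    rw [Matrix.rank_transpose, h]
  have h3 := LinearMap.finrank_range_add_finrank_ker A.vecMulLinear
  rw [h2, Module.finrank_pi] at h3
  have h4 : Module.finrank K (LinearMap.ker A.vecMulLinear) = 0 := by omega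
  have h5 : LinearMap.ker A.vecMulLinear = ⊥ := Submodule.finrank_eq_zero.mp h4
  intro v hv
  have hv' : v ∈ LinearMap.ker A.vecMulLinear := by
    simpa [Matrix.vecMulLinear_apply] using hv
  simpa [h5] using hv'

lemma aux_vecMul_sum {K : Type*} [Field K] {m n : Type*} [Fintype m]
    (A : Matrix m n K) (v : m → K) :
    Matrix.vecMul v A = ∑ i, v i • A i := by
  funext j
  simp [Matrix.vecMul, dotProduct, Finset.sum_apply]

/-- Membership in the row span. -/
lemma aux_mem_span {K : Type*} [Field K] {m n : Type*} [Fintype m]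
    (A : Matrix m n K) (w : n → K) :
    w ∈ Submodule.span K (Set.range fun r => A r) ↔ ∃ c, Matrix.vecMul c A = w := by
  have : (Set.range fun r => A r) = Set.range A.row := rfl
  rw [this, ← range_vecMulLinear]
  exact ⟨fun h => h, fun h => h⟩

theorem stmt18 {K : Type*} [Field K] [Fintype K] {q k : ℕ}
    (hq : Fintype.card K = q) (hk : 0 < k)
    (p : Polynomial K) (hmonic : p.Monic) (hdeg : p.natDegree = k + 1)
    (M : Matrix (Fin (k + 1)) (Fin (k + 1)) K) (hM : M = companion p)
    (horder : orderOf M = q ^ (k + 1) - 1)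
    (U1 : Matrix (Fin k) (Fin k) K) (U2 : Matrix (Fin k) (Fin (k + 1)) K)
    (hU1 : U1.rank = k) (hU2 : U2.rank = k) :
    ∀ C : Set (Submodule K (Fin k ⊕ Fin (k + 1) → K)),
      C = orbitSet U1 U2 M ∪
        {Submodule.span K (Set.range fun r => Sum.elim (U1 r) (0 : Fin (k + 1) → K)),
         Submodule.span K (Set.range fun r => Sum.elim (0 : Fin k → K) (U2 r))} →
      ((∀ W ∈ C, finrank K ↥W = k) ∧
       (∀ W ∈ C, ∀ W' ∈ C, W ≠ W' → W ⊓ W' = ⊥) ∧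
       C.ncard = q ^ (k + 1) + 1) := by
  classical
  intro C hC
  -- numerics
  have hq2 : 2 ≤ q := by
    rw [← hq]; exact Fintype.one_lt_card
  have hqk : 2 ≤ q ^ (k + 1) := le_trans hq2 (Nat.le_self_pow (Nat.succ_ne_zero k) q)
  have hord_pos : 0 < orderOf M := by rw [horder]; omega
  -- the ring R = K[X]/(p)
  set R := AdjoinRoot p with hR
  set x : R := AdjoinRoot.root p with hx
  let pb := AdjoinRoot.powerBasis' hmonic
  let b : Basis (Fin (k + 1)) K R := pb.basis.reindex (finCongr hdeg)
  have hb : ∀ i : Fin (k + 1), b i = x ^ (i : ℕ) := by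
    intro i
    rw [Basis.reindex_apply, PowerBasis.basis_eq_pow, AdjoinRoot.powerBasis'_gen]
    congr 1
  let φ : (Fin (k + 1) → K) ≃ₗ[K] R := b.equivFun.symm
  have hφ : ∀ v : Fin (k + 1) → K, φ v = ∑ i, v i • x ^ (i : ℕ) := by
    intro v
    rw [show φ v = b.equivFun.symm v from rfl, Basis.equivFun_symm_apply]
    exact Finset.sum_congr rfl fun i _ => by rw [hb]
  have hsingle : ∀ i : Fin (k + 1), φ (Pi.single i 1) = x ^ (i : ℕ) := by
    intro i
    rw [hφ, Finset.sum_eq_single i]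
    · simp
    · intro j _ hji; simp [Pi.single_apply, hji.symm]
    · simp
  -- rows of M
  have hrow : ∀ i : Fin (k + 1), φ (M i) = x ^ ((i : ℕ) + 1) := by
    intro i
    rw [hφ]
    by_cases hik : (i : ℕ) = k
    · -- last row
      have haev : (Polynomial.aeval x) p = 0 := by
        rw [hx, AdjoinRoot.aeval_eq, AdjoinRoot.mk_self]
      rw [Polynomial.aeval_eq_sum_range, hdeg, Finset.sum_range_succ] at haev
      have hlead : p.coeff (k + 1) = 1 := by
        have := hmonic.coeff_natDegree
        rwa [hdeg] at this
      rw [hlead, one_smul] at haev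
      have hsum : ∑ n ∈ Finset.range (k + 1), p.coeff n • x ^ n = -(x ^ (k + 1)) :=
        eq_neg_of_add_eq_zero_left haev
      have hMi : ∀ j : Fin (k + 1), M i j = -p.coeff (j : ℕ) := by
        intro j; rw [hM]; simp [companion, hik]
      calc ∑ j : Fin (k + 1), M i j • x ^ (j : ℕ)
          = ∑ j : Fin (k + 1), -(p.coeff (j : ℕ) • x ^ (j : ℕ)) := by
            refine Finset.sum_congr rfl fun j _ => by rw [hMi j, neg_smul]
        _ = -∑ j : Fin (k + 1), p.coeff (j : ℕ) • x ^ (j : ℕ) := by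
            rw [Finset.sum_neg_distrib]
        _ = -∑ n ∈ Finset.range (k + 1), p.coeff n • x ^ n := by
            rw [Fin.sum_univ_eq_sum_range (fun n => p.coeff n • x ^ n)]
        _ = x ^ (k + 1) := by rw [hsum, neg_neg]
        _ = x ^ ((i : ℕ) + 1) := by rw [hik]
    · -- shift row
      have hi1 : (i : ℕ) + 1 < k + 1 := by
        have := i.isLt; omega
      rw [Finset.sum_eq_single (⟨(i : ℕ) + 1, hi1⟩ : Fin (k + 1))]
      · have h1 : M i ⟨(i : ℕ) + 1, hi1⟩ = 1 := by rw [hM]; simp [companion, hik]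
        rw [h1, one_smul]
      · intro j _ hj
        have h0 : M i j = 0 := by
          rw [hM]
          have hne : ¬((i : ℕ) + 1 = (j : ℕ)) := by
            intro hc; apply hj; apply Fin.ext; simp [← hc]
          simp [companion, hik, hne]
        rw [h0, zero_smul]
      · intro h; exact absurd (Finset.mem_univ _) h
  -- vecMul corresponds to multiplication by x
  have hmul : ∀ v : Fin (k + 1) → K, φ (Matrix.vecMul v M) = x * φ v := by
    intro v
    rw [aux_vecMul_sum, map_sum, hφ, Finset.mul_sum]
    refine Finset.sum_congr rfl fun i _ => ?_
    rw [map_smul, hrow, pow_succ', mul_smul_comm]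
  have hP : ∀ (n : ℕ) (v : Fin (k + 1) → K),
      φ (Matrix.vecMul v (M ^ n)) = x ^ n * φ v := by
    intro n
    induction n with
    | zero => intro v; simp [Matrix.vecMul_one]
    | succ n ih =>
      intro v
      rw [pow_succ, ← Matrix.vecMul_vecMul, hmul, ih, pow_succ]
      ring
  -- M ^ i = M ^ j ↔ x ^ i = x ^ j
  have hMx : ∀ i j : ℕ, M ^ i = M ^ j ↔ x ^ i = x ^ j := by
    intro i j
    constructor
    · intro h
      have h1 := hP i (Pi.single 0 1)
      rw [h, hP j, hsingle] at h1
      simpa using h1.symm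
    · intro h
      have hrows : ∀ v, Matrix.vecMul v (M ^ i) = Matrix.vecMul v (M ^ j) := by
        intro v
        apply φ.injective
        rw [hP, hP, h]
      apply Matrix.ext
      intro r c
      have := hrows (Pi.single r 1)
      rw [Matrix.single_one_vecMul, Matrix.single_one_vecMul] at this
      exact congrFun this c
  -- x has order = orderOf M, and is a unit
  have hx_ord : x ^ orderOf M = 1 := by
    have := (hMx (orderOf M) 0).mp (by rw [pow_orderOf_eq_one, pow_zero])
    simpa using this
  have hxunit : IsUnit x := IsUnit.of_pow_eq_one hx_ord hord_pos.ne'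
  have hordx : orderOf x = orderOf M := by
    apply Nat.dvd_antisymm
    · exact orderOf_dvd_of_pow_eq_one hx_ord
    · apply orderOf_dvd_of_pow_eq_one
      have : M ^ orderOf x = M ^ 0 := by
        rw [hMx]
        rw [pow_orderOf_eq_one, pow_zero]
      simpa using this
  -- finiteness and counting in R
  letI : Fintype R := Fintype.ofEquiv _ φ.toEquiv
  have hcardR : Fintype.card R = q ^ (k + 1) := by
    rw [← Fintype.card_congr φ.toEquiv, Fintype.card_fun, hq, Fintype.card_fin]
  have hRnontriv : Nontrivial R := Fintype.one_lt_card_iff_nontrivial.mp (by omega)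
  -- every nonzero element of R is a unit
  have hunit : ∀ y : R, y ≠ 0 → IsUnit y := by
    intro y hy
    set u : Rˣ := hxunit.unit with hu
    have huc : (u : R) = x := hxunit.unit_spec
    have hou : orderOf u = orderOf M := by
      rw [← hordx, ← orderOf_units, huc]
    let f : Rˣ → {y : R // y ≠ 0} := fun v => ⟨(v : R), v.ne_zero⟩
    have hfinj : Function.Injective f := by
      intro a b hab
      exact Units.ext (congrArg Subtype.val hab)
    have hcard_sub : Fintype.card {y : R // y ≠ 0} = q ^ (k + 1) - 1 := by
      have h1 : Fintype.card {y : R // ¬ (y = 0)} =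
          Fintype.card R - Fintype.card {y : R // y = 0} :=
        Fintype.card_subtype_compl _
      rw [Fintype.card_subtype_eq (0 : R)] at h1
      rw [← hcardR]
      exact h1
    have hle : Fintype.card Rˣ ≤ q ^ (k + 1) - 1 := by
      rw [← hcard_sub]; exact Fintype.card_le_of_injective f hfinj
    have hge : q ^ (k + 1) - 1 ≤ Fintype.card Rˣ := by
      have hdvd : orderOf u ∣ Fintype.card Rˣ := orderOf_dvd_card
      rw [hou, horder] at hdvd
      exact Nat.le_of_dvd Fintype.card_pos hdvd
    have hbij : Function.Bijective f := by
      rw [Fintype.bijective_iff_injective_and_card]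
      refine ⟨hfinj, ?_⟩
      rw [hcard_sub]; omega
    obtain ⟨v, hv⟩ := hbij.2 ⟨y, hy⟩
    exact ⟨v, congrArg Subtype.val hv⟩
  -- cancellation facts
  have hzero : ∀ (n : ℕ) (y : R), x ^ n * y = 0 → y = 0 := by
    intro n y h
    exact ((hxunit.pow n).mul_right_eq_zero).mp h
  have hcancel : ∀ (i j : ℕ) (y : R), y ≠ 0 → x ^ i * y = x ^ j * y → M ^ i = M ^ j := by
    intro i j y hy h
    rw [hMx]
    rw [mul_comm (x ^ i) y, mul_comm (x ^ j) y] at h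
    exact (hunit y hy).mul_left_cancel h
  -- row-full-rank kernels
  have hkerU1 : ∀ v : Fin k → K, Matrix.vecMul v U1 = 0 → v = 0 := by
    refine aux_vecMul_ker U1 ?_
    rwa [Fintype.card_fin]
  have hkerU2 : ∀ v : Fin k → K, Matrix.vecMul v U2 = 0 → v = 0 := by
    refine aux_vecMul_ker U2 ?_
    rwa [Fintype.card_fin]
  -- the matrices whose row spans are the code members
  set B : ℕ → Matrix (Fin k) (Fin k ⊕ Fin (k + 1)) K :=
    fun i r => Sum.elim (U1 r) (Matrix.vecMul (U2 r) (M ^ i)) with hB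
  set B' : Matrix (Fin k) (Fin k ⊕ Fin (k + 1)) K :=
    fun r => Sum.elim (U1 r) (0 : Fin (k + 1) → K) with hB'
  set B'' : Matrix (Fin k) (Fin k ⊕ Fin (k + 1)) K :=
    fun r => Sum.elim (0 : Fin k → K) (U2 r) with hB''
  -- components of vecMul for these block matrices
  have hcomp : ∀ (c : Fin k → K) (A1 : Matrix (Fin k) (Fin k) K)
      (A2 : Matrix (Fin k) (Fin (k + 1)) K),
      Matrix.vecMul c (Matrix.of fun r => Sum.elim (A1 r) (A2 r)) =
        Sum.elim (Matrix.vecMul c A1) (Matrix.vecMul c A2) := by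
    intro c A1 A2
    have : (Matrix.of fun r => Sum.elim (A1 r) (A2 r)) = Matrix.fromCols A1 A2 := rfl
    rw [this, Matrix.vecMul_fromCols]
  have hBc : ∀ (i : ℕ) (c : Fin k → K),
      Matrix.vecMul c (B i) =
        Sum.elim (Matrix.vecMul c U1) (Matrix.vecMul (Matrix.vecMul c U2) (M ^ i)) := by
    intro i c
    funext j
    cases j with
    | inl a => simp [hB, Matrix.vecMul, dotProduct]
    | inr a =>
      simp only [hB, Matrix.of_apply, Matrix.vecMul, dotProduct, Sum.elim_inr,
        Finset.mul_sum, Finset.sum_mul, mul_assoc]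
      rw [Finset.sum_comm]
  have hB'c : ∀ c : Fin k → K,
      Matrix.vecMul c B' = Sum.elim (Matrix.vecMul c U1) (0 : Fin (k + 1) → K) := by
    intro c
    funext j
    cases j with
    | inl a => simp [hB', Matrix.vecMul, dotProduct]
    | inr a => simp [hB', Matrix.vecMul, dotProduct]
  have hB''c : ∀ c : Fin k → K,
      Matrix.vecMul c B'' = Sum.elim (0 : Fin k → K) (Matrix.vecMul c U2) := by
    intro c
    funext j
    cases j with
    | inl a => simp [hB'', Matrix.vecMul, dotProduct]
    | inr a => simp [hB'', Matrix.vecMul, dotProduct]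
  -- the submodules
  set W : ℕ → Submodule K (Fin k ⊕ Fin (k + 1) → K) :=
    fun i => Submodule.span K
      (Set.range fun r => Sum.elim (U1 r) (Matrix.vecMul (U2 r) (M ^ i))) with hW
  set W' : Submodule K (Fin k ⊕ Fin (k + 1) → K) :=
    Submodule.span K (Set.range fun r => Sum.elim (U1 r) (0 : Fin (k + 1) → K)) with hW'
  set W'' : Submodule K (Fin k ⊕ Fin (k + 1) → K) :=
    Submodule.span K (Set.range fun r => Sum.elim (0 : Fin k → K) (U2 r)) with hW''
  have hWmem : ∀ (i : ℕ) w, w ∈ W i ↔ ∃ c, Matrix.vecMul c (B i) = w := by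
    intro i w
    simp only [hW, hB]
    exact aux_mem_span _ w
  have hW'mem : ∀ w, w ∈ W' ↔ ∃ c, Matrix.vecMul c B' = w := by
    intro w
    simp only [hW', hB']
    exact aux_mem_span _ w
  have hW''mem : ∀ w, w ∈ W'' ↔ ∃ c, Matrix.vecMul c B'' = w := by
    intro w
    simp only [hW'', hB'']
    exact aux_mem_span _ w
  -- trivial kernels of the block matrices
  have hkerB : ∀ (i : ℕ) (c : Fin k → K), Matrix.vecMul c (B i) = 0 → c = 0 := by
    intro i c h
    rw [hBc] at h
    apply hkerU1
    funext a
    exact congrFun h (Sum.inl a)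
  have hkerB' : ∀ c : Fin k → K, Matrix.vecMul c B' = 0 → c = 0 := by
    intro c h
    rw [hB'c] at h
    apply hkerU1
    funext a
    exact congrFun h (Sum.inl a)
  have hkerB'' : ∀ c : Fin k → K, Matrix.vecMul c B'' = 0 → c = 0 := by
    intro c h
    rw [hB''c] at h
    apply hkerU2
    funext a
    exact congrFun h (Sum.inr a)
  -- finrank of a row span with trivial kernel
  have hker_fin : ∀ (A : Matrix (Fin k) (Fin k ⊕ Fin (k + 1)) K),
      (∀ c, Matrix.vecMul c A = 0 → c = 0) →
      finrank K (Submodule.span K (Set.range fun r => A r)) = k := by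
    intro A hA
    have h1 : Submodule.span K (Set.range fun r => A r) = LinearMap.range A.vecMulLinear :=
      (range_vecMulLinear A).symm
    rw [h1]
    have hinj : Function.Injective A.vecMulLinear := by
      apply LinearMap.ker_eq_bot.mp
      rw [Submodule.eq_bot_iff]
      intro c hc
      exact hA c hc
    rw [LinearMap.finrank_range_of_inj hinj, Module.finrank_pi, Fintype.card_fin]
  have hfin : ∀ i : ℕ, finrank K (W i) = k := by
    intro i
    simp only [hW, hB] at *
    exact hker_fin _ (hkerB i)
  have hfin' : finrank K W' = k := by
    simp only [hW', hB'] at *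
    exact hker_fin _ hkerB'
  have hfin'' : finrank K W'' = k := by
    simp only [hW'', hB''] at *
    exact hker_fin _ hkerB''
  -- distinctness helper
  have hne_of_inf : ∀ A B : Submodule K (Fin k ⊕ Fin (k + 1) → K),
      A ⊓ B = ⊥ → finrank K A = k → A ≠ B := by
    intro A B h hA hEq
    rw [← hEq, inf_idem] at h
    rw [h, finrank_bot] at hA
    omega
  -- c = d from equal first blocks
  have hfirst : ∀ c d : Fin k → K, Matrix.vecMul c U1 = Matrix.vecMul d U1 → c = d := by
    intro c d h
    have h2 : Matrix.vecMul (c - d) U1 = 0 := by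
      rw [Matrix.sub_vecMul, h, sub_self]
    have := hkerU1 _ h2
    exact sub_eq_zero.mp this
  -- intersections
  have key : ∀ i j : ℕ, M ^ i ≠ M ^ j → W i ⊓ W j = ⊥ := by
    intro i j hij
    rw [Submodule.eq_bot_iff]
    intro w hw
    obtain ⟨c, hc⟩ := (hWmem i w).mp hw.1
    obtain ⟨d, hd⟩ := (hWmem j w).mp hw.2
    rw [hBc] at hc hd
    have hcd : c = d := by
      apply hfirst
      funext a
      exact congrFun (hc.trans hd.symm) (Sum.inl a)
    subst hcd
    have h2 : Matrix.vecMul (Matrix.vecMul c U2) (M ^ i) =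
        Matrix.vecMul (Matrix.vecMul c U2) (M ^ j) := by
      funext a
      exact congrFun (hc.trans hd.symm) (Sum.inr a)
    have h3 : x ^ i * φ (Matrix.vecMul c U2) = x ^ j * φ (Matrix.vecMul c U2) := by
      rw [← hP, ← hP, h2]
    by_cases hy : φ (Matrix.vecMul c U2) = 0
    · have h4 : Matrix.vecMul c U2 = 0 := by
        have := φ.map_eq_zero_iff.mp hy
        exact this
      have h5 : c = 0 := hkerU2 _ h4
      rw [← hc, h5]
      simp
    · exact absurd (hcancel i j _ hy h3) hij
  have key2 : ∀ i : ℕ, W i ⊓ W' = ⊥ := by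
    intro i
    rw [Submodule.eq_bot_iff]
    intro w hw
    obtain ⟨c, hc⟩ := (hWmem i w).mp hw.1
    obtain ⟨d, hd⟩ := (hW'mem w).mp hw.2
    rw [hBc] at hc
    rw [hB'c] at hd
    have hcd : c = d := by
      apply hfirst
      funext a
      exact congrFun (hc.trans hd.symm) (Sum.inl a)
    subst hcd
    have h2 : Matrix.vecMul (Matrix.vecMul c U2) (M ^ i) = 0 := by
      funext a
      exact congrFun (hc.trans hd.symm) (Sum.inr a)
    have h3 : x ^ i * φ (Matrix.vecMul c U2) = 0 := by
      rw [← hP, h2, map_zero]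
    have h4 : Matrix.vecMul c U2 = 0 := φ.map_eq_zero_iff.mp (hzero i _ h3)
    have h5 : c = 0 := hkerU2 _ h4
    rw [← hc, h5]
    simp
  have key3 : ∀ i : ℕ, W i ⊓ W'' = ⊥ := by
    intro i
    rw [Submodule.eq_bot_iff]
    intro w hw
    obtain ⟨c, hc⟩ := (hWmem i w).mp hw.1
    obtain ⟨d, hd⟩ := (hW''mem w).mp hw.2
    rw [hBc] at hc
    rw [hB''c] at hd
    have h1 : Matrix.vecMul c U1 = 0 := by
      funext a
      exact congrFun (hc.trans hd.symm) (Sum.inl a)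
    have h5 : c = 0 := hkerU1 _ h1
    rw [← hc, h5]
    simp
  have key4 : W' ⊓ W'' = ⊥ := by
    rw [Submodule.eq_bot_iff]
    intro w hw
    obtain ⟨c, hc⟩ := (hW'mem w).mp hw.1
    obtain ⟨d, hd⟩ := (hW''mem w).mp hw.2
    rw [hB'c] at hc
    rw [hB''c] at hd
    have h1 : Matrix.vecMul c U1 = 0 := by
      funext a
      exact congrFun (hc.trans hd.symm) (Sum.inl a)
    have h5 : c = 0 := hkerU1 _ h1
    rw [← hc, h5]
    simp
  -- equality of orbit members
  have hWeq : ∀ i j : ℕ, M ^ i = M ^ j → W i = W j := by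
    intro i j h
    simp only [hW, h]
  have hWinj : ∀ i j : ℕ, W i = W j → M ^ i = M ^ j := by
    intro i j h
    by_contra hne
    exact hne_of_inf (W i) (W j) (key i j hne) (hfin i) h
  -- C as a finite set
  have horbit : orbitSet U1 U2 M = W '' (Set.Iio (orderOf M)) := by
    ext V
    constructor
    · rintro ⟨i, rfl⟩
      refine ⟨i % orderOf M, Nat.mod_lt i hord_pos, ?_⟩
      have hpm : M ^ (i % orderOf M) = M ^ i := pow_mod_orderOf M i
      rw [hWeq _ _ hpm, hW]
    · rintro ⟨i, _, rfl⟩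
      exact ⟨i, by rw [hW]⟩
  -- membership normalization
  have hCmem : ∀ V, V ∈ C → (∃ i, V = W i) ∨ V = W' ∨ V = W'' := by
    intro V hV
    rw [hC] at hV
    rcases hV with ⟨i, hi⟩ | hV
    · left
      exact ⟨i, by rw [hW]; exact hi⟩
    · simp only [Set.mem_insert_iff, Set.mem_singleton_iff] at hV
      right
      exact hV
  -- injectivity of i ↦ W i on [0, orderOf M)
  have hu : (hxunit.unit : R) = x := hxunit.unit_spec
  have hou : orderOf hxunit.unit = orderOf M := by
    rw [← hordx, ← orderOf_units, hu]
  have hord_inj : ∀ i j : ℕ, i < orderOf M → j < orderOf M → M ^ i = M ^ j → i = j := by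
    intro i j hi hj h
    have hxx : x ^ i = x ^ j := (hMx i j).mp h
    have h2 : hxunit.unit ^ i = hxunit.unit ^ j := by
      apply Units.ext
      rw [Units.val_pow_eq_pow_val, Units.val_pow_eq_pow_val, hu, hxx]
    have h3 : i ≡ j [MOD orderOf M] := by
      rw [← hou]
      exact pow_eq_pow_iff_modEq.mp h2
    have h4 : i % orderOf M = j % orderOf M := h3
    rwa [Nat.mod_eq_of_lt hi, Nat.mod_eq_of_lt hj] at h4
  -- the finite orbit
  set F : Finset (Submodule K (Fin k ⊕ Fin (k + 1) → K)) :=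
    (Finset.range (orderOf M)).image W with hF
  have horbit2 : orbitSet U1 U2 M = ↑F := by
    rw [horbit, hF, Finset.coe_image, Finset.coe_range]
  have hinjOn : Set.InjOn W ↑(Finset.range (orderOf M)) := by
    intro i hi j hj h
    simp only [Finset.coe_range, Set.mem_Iio] at hi hj
    exact hord_inj i j hi hj (hWinj i j h)
  have hFcard : F.card = orderOf M := by
    rw [hF, Finset.card_image_of_injOn hinjOn, Finset.card_range]
  have hW'F : W' ∉ F := by
    intro hmem
    rw [hF, Finset.mem_image] at hmem
    obtain ⟨i, _, hEq⟩ := hmem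
    exact hne_of_inf (W i) W' (key2 i) (hfin i) hEq
  have hW''F : W'' ∉ F := by
    intro hmem
    rw [hF, Finset.mem_image] at hmem
    obtain ⟨i, _, hEq⟩ := hmem
    exact hne_of_inf (W i) W'' (key3 i) (hfin i) hEq
  have hW'W'' : W' ≠ W'' := hne_of_inf W' W'' key4 hfin'
  refine ⟨?_, ?_, ?_⟩
  · -- finrank
    intro V hV
    rcases hCmem V hV with ⟨i, rfl⟩ | rfl | rfl
    · exact hfin i
    · exact hfin'
    · exact hfin''
  · -- pairwise trivial intersection
    intro V hV V2 hV2 hne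
    rcases hCmem V hV with ⟨i, rfl⟩ | rfl | rfl <;>
      rcases hCmem V2 hV2 with ⟨j, rfl⟩ | rfl | rfl
    · by_cases h : M ^ i = M ^ j
      · exact absurd (hWeq i j h) hne
      · exact key i j h
    · exact key2 i
    · exact key3 i
    · rw [inf_comm]; exact key2 j
    · exact absurd rfl hne
    · exact key4
    · rw [inf_comm]; exact key3 j
    · rw [inf_comm]; exact key4
    · exact absurd rfl hne
  · -- cardinality
    have hCfin : C = ↑(insert W' (insert W'' F)) := by
      rw [hC, horbit2, Finset.coe_insert, Finset.coe_insert, Set.union_comm,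
        Set.insert_union, Set.singleton_union]
    have h1 : W' ∉ insert W'' F := by
      intro hmem
      rcases Finset.mem_insert.mp hmem with h | h
      · exact hW'W'' h
      · exact hW'F h
    have hcard : (insert W' (insert W'' F)).card = orderOf M + 2 := by
      rw [Finset.card_insert_of_notMem h1, Finset.card_insert_of_notMem hW''F, hFcard]
    rw [hCfin, Set.ncard_coe_finset, hcard, horder]
    omega
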